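/- For every integer n ≥ 1, the polynomials num(n,x) and den(n,x) are coprime in ℤ[x], i.e. gcd(num(n,x), den(n,x)) = 1. -/

import Mathlib

open Polynomial Finset Complex

/-- `h_λ(x) = ∏_{i=1}^{n} (1+x^i)^(⌊n/i⌋ - m_λ(i))` in `ℤ[x]`, where `m_λ(i)` is the
multiplicity of the part `i` in the partition `λ` of `n`. -/
noncomputable def hPoly (n : ℕ) (μ : Nat.Partition n) : Polynomial ℤ :=
  ∏ i ∈ Finset.Icc 1 n, (1 + X ^ i) ^ (n / i - μ.parts.count i)

/-- `G(n,x)`: the (normalized) gcd of the `h_λ(x)` over all partitions `λ` of `n`. -/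
noncomputable def GPoly (n : ℕ) : Polynomial ℤ :=
  Finset.univ.gcd (hPoly n)

theorem GPoly_dvd_sum (n : ℕ) :
    ∃ q : Polynomial ℤ, (∑ μ : Nat.Partition n, hPoly n μ) = GPoly n * q :=
  exists_eq_mul_right_of_dvd
    (Finset.dvd_sum fun μ _ => Finset.gcd_dvd (Finset.mem_univ μ))

/-- `num(n,x) = (∑_{λ ⊢ n} h_λ(x)) / G(n,x)`. -/
noncomputable def numPoly (n : ℕ) : Polynomial ℤ :=
  (GPoly_dvd_sum n).choose

theorem GPoly_dvd_prod (n : ℕ) :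
    ∃ q : Polynomial ℤ,
      (∏ i ∈ Finset.Icc 1 n, ((1 : Polynomial ℤ) + X ^ i) ^ (n / i)) = GPoly n * q :=
  exists_eq_mul_right_of_dvd <|
    dvd_trans (Finset.gcd_dvd (Finset.mem_univ (Nat.Partition.indiscrete n)))
      (Finset.prod_dvd_prod_of_dvd _ _ fun _ _ => pow_dvd_pow _ (Nat.sub_le _ _))

/-- `den(n,x) = (∏_{i=1}^{n} (1+x^i)^⌊n/i⌋) / G(n,x)`. -/
noncomputable def denPoly (n : ℕ) : Polynomial ℤ :=
  (GPoly_dvd_prod n).choose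


namespace GcdAux

/-- Every part of a partition of `n` lies in `[1, n]`. -/
lemma parts_mem_Icc {n : ℕ} (μ : Nat.Partition n) {j : ℕ} (hj : j ∈ μ.parts) :
    j ∈ Finset.Icc 1 n := by
  rcases Multiset.exists_cons_of_mem hj with ⟨t, ht⟩
  have h1 : 0 < j := μ.parts_pos hj
  have h2 : j + t.sum = n := by
    have := μ.parts_sum
    rwa [ht, Multiset.sum_cons] at this
  simp only [Finset.mem_Icc]
  omega

lemma sum_count_eq {F : Finset ℕ} {s : Multiset ℕ} (h : ∀ p ∈ s, p ∈ F) :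
    ∑ j ∈ F, j * s.count j = s.sum := by
  induction s using Multiset.induction_on with
  | empty => simp
  | cons a t ih =>
    have ha : a ∈ F := h a (Multiset.mem_cons_self a t)
    have ht : ∀ p ∈ t, p ∈ F := fun p hp => h p (Multiset.mem_cons_of_mem hp)
    simp only [Multiset.count_cons, Multiset.sum_cons, Nat.mul_add]
    rw [Finset.sum_add_distrib, ih ht]
    have : ∑ j ∈ F, j * (if j = a then 1 else 0) = a := by
      rw [Finset.sum_congr rfl (g := fun j => if j = a then j else 0)
        (fun j _ => by split <;> simp_all)]
      simp [Finset.sum_ite_eq' F a (fun j => j), ha]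
    omega

lemma sum_count_parts {n : ℕ} (μ : Nat.Partition n) :
    ∑ j ∈ Finset.Icc 1 n, j * μ.parts.count j = n := by
  rw [sum_count_eq (fun p hp => parts_mem_Icc μ hp), μ.parts_sum]

/-- the set of `j ∈ [1,n]` with `z^j = -1` for `z = exp(πi/e)`, i.e. odd multiples of `e`. -/
def Sf (n e : ℕ) : Finset ℕ := (Finset.Icc 1 n).filter (fun j => 2 * e ∣ j + e)

lemma mem_Sf {n e j : ℕ} : j ∈ Sf n e ↔ (1 ≤ j ∧ j ≤ n) ∧ 2 * e ∣ j + e := by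
  simp [Sf, Finset.mem_filter, Finset.mem_Icc]

lemma e_mem_Sf {n e : ℕ} (he : 1 ≤ e) (hen : e ≤ n) : e ∈ Sf n e :=
  mem_Sf.mpr ⟨⟨he, hen⟩, ⟨1, by ring⟩⟩

lemma Sf_ge {n e j : ℕ} (he : 1 ≤ e) (hj : j ∈ Sf n e) : e ≤ j := by
  obtain ⟨⟨h1, _⟩, k, hk⟩ := mem_Sf.mp hj
  rcases Nat.eq_zero_or_pos k with rfl | hk0
  · omega
  · have : 2 * e * 1 ≤ 2 * e * k := Nat.mul_le_mul_left _ hk0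
    omega

lemma Sf_ge_three {n e j : ℕ} (he : 1 ≤ e) (hj : j ∈ Sf n e) (hne : j ≠ e) : 3 * e ≤ j := by
  obtain ⟨⟨h1, _⟩, k, hk⟩ := mem_Sf.mp hj
  rcases Nat.lt_or_ge k 2 with hk2 | hk2
  · interval_cases k <;> omega
  · have : 2 * e * 2 ≤ 2 * e * k := Nat.mul_le_mul_left _ hk2
    omega

end GcdAux

namespace GcdAux

variable {n e : ℕ}

lemma count_le_div {n : ℕ} (μ : Nat.Partition n) {j : ℕ} (hj1 : 1 ≤ j) :
    μ.parts.count j ≤ n / j := by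
  rcases le_or_gt j n with hjn | hjn
  · have h1 : j * μ.parts.count j ≤ n :=
      (Finset.single_le_sum (f := fun i => i * μ.parts.count i)
        (fun i _ => Nat.zero_le _) (Finset.mem_Icc.mpr ⟨hj1, hjn⟩)).trans_eq
        (sum_count_parts μ)
    rw [mul_comm] at h1
    exact (Nat.le_div_iff_mul_le (by omega)).mpr h1
  · have h0 : μ.parts.count j = 0 := by
      rw [Multiset.count_eq_zero]
      intro hmem
      have := (Finset.mem_Icc.mp (parts_mem_Icc μ hmem)).2
      omega
    rw [h0]
    exact Nat.zero_le _

/-- number of parts that are odd multiples of `e`. -/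
def csum (n e : ℕ) (μ : Nat.Partition n) : ℕ := ∑ j ∈ Sf n e, μ.parts.count j

lemma csum_mul_le (he : 1 ≤ e) (μ : Nat.Partition n) : csum n e μ * e ≤ n := by
  calc csum n e μ * e = ∑ j ∈ Sf n e, μ.parts.count j * e := by rw [csum, Finset.sum_mul]
    _ ≤ ∑ j ∈ Sf n e, j * μ.parts.count j :=
        Finset.sum_le_sum fun j hj => by
          rw [mul_comm]
          exact Nat.mul_le_mul (Sf_ge he hj) le_rfl
    _ ≤ ∑ j ∈ Finset.Icc 1 n, j * μ.parts.count j :=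
        Finset.sum_le_sum_of_subset (Finset.filter_subset _ _)
    _ = n := sum_count_parts μ

lemma csum_le (he : 1 ≤ e) (μ : Nat.Partition n) : csum n e μ ≤ n / e :=
  (Nat.le_div_iff_mul_le he).mpr (csum_mul_le he μ)

/-- If some part is an odd multiple of `e` other than `e` itself, we get extra room `2e`. -/
lemma csum_mul_add_le (he : 1 ≤ e) (μ : Nat.Partition n) {j0 : ℕ} (hj0 : j0 ∈ Sf n e)
    (hne : j0 ≠ e) (hc : 1 ≤ μ.parts.count j0) : csum n e μ * e + 2 * e ≤ n := by
  have key : ∀ j ∈ Sf n e, μ.parts.count j * e + (if j = j0 then 2 * e else 0) ≤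
      j * μ.parts.count j := by
    intro j hj
    by_cases h : j = j0
    · subst h
      rw [if_pos rfl]
      have h3 : 3 * e ≤ j := Sf_ge_three he hj hne
      have h4 : 3 * e * μ.parts.count j ≤ j * μ.parts.count j := Nat.mul_le_mul h3 le_rfl
      have h5 : 2 * e * 1 ≤ 2 * e * μ.parts.count j := Nat.mul_le_mul le_rfl hc
      nlinarith
    · rw [if_neg h, add_zero, mul_comm]
      exact Nat.mul_le_mul (Sf_ge he hj) le_rfl
  calc csum n e μ * e + 2 * e
      = ∑ j ∈ Sf n e, (μ.parts.count j * e + if j = j0 then 2 * e else 0) := by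
        rw [Finset.sum_add_distrib, Finset.sum_ite_eq' (Sf n e) j0 (fun _ => 2 * e), if_pos hj0,
          csum, Finset.sum_mul]
    _ ≤ ∑ j ∈ Sf n e, j * μ.parts.count j := Finset.sum_le_sum key
    _ ≤ ∑ j ∈ Finset.Icc 1 n, j * μ.parts.count j :=
        Finset.sum_le_sum_of_subset (Finset.filter_subset _ _)
    _ = n := sum_count_parts μ

lemma count_erase_eq_zero (he : 1 ≤ e) (μ : Nat.Partition n)
    (hcnt : μ.parts.count e = n / e) {j : ℕ} (hj : j ∈ (Sf n e).erase e) :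
    μ.parts.count j = 0 := by
  obtain ⟨hne, hjS⟩ := Finset.mem_erase.mp hj
  by_contra h0
  have hc : 1 ≤ μ.parts.count j := Nat.pos_of_ne_zero h0
  have h1 := csum_mul_add_le he μ hjS hne hc
  have hen : e ≤ n := le_trans (Sf_ge he hjS) (mem_Sf.mp hjS).1.2
  have h2 : n / e ≤ csum n e μ := by
    rw [csum, ← Finset.add_sum_erase _ _ (e_mem_Sf he hen), ← hcnt]
    exact Nat.le_add_right _ _
  have h3 : n / e * e + 2 * e ≤ n := by
    have h2' : n / e * e ≤ csum n e μ * e := Nat.mul_le_mul h2 le_rfl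
    omega
  have h4 : n % e < e := Nat.mod_lt _ (by omega)
  have h5 : n / e * e + n % e = n := Nat.div_add_mod' n e
  omega

lemma count_e_of_csum_eq (he : 1 ≤ e) (hen : e ≤ n) (μ : Nat.Partition n)
    (hcs : csum n e μ = n / e) : μ.parts.count e = n / e := by
  by_contra h0
  have h1 : μ.parts.count e ≤ csum n e μ := by
    rw [csum, ← Finset.add_sum_erase _ _ (e_mem_Sf he hen)]
    exact Nat.le_add_right _ _
  have h2 : μ.parts.count e < n / e := lt_of_le_of_ne (hcs ▸ h1) h0
  -- then some j in erase has positive count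
  have h3 : ∑ j ∈ (Sf n e).erase e, μ.parts.count j ≠ 0 := by
    intro hz
    rw [csum, ← Finset.add_sum_erase _ _ (e_mem_Sf he hen), hz, add_zero] at hcs
    omega
  obtain ⟨j0, hj0, hc0⟩ := Finset.exists_ne_zero_of_sum_ne_zero h3
  have h4 := csum_mul_add_le he μ (Finset.mem_of_mem_erase hj0)
    (Finset.ne_of_mem_erase hj0) (Nat.pos_of_ne_zero hc0)
  have h5 : n / e * e = csum n e μ * e := by rw [hcs]
  have h6 : n % e < e := Nat.mod_lt _ (by omega)
  have h7 : n / e * e + n % e = n := Nat.div_add_mod' n e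
  omega

end GcdAux

namespace GcdAux

noncomputable def zC (e : ℕ) : ℂ := Complex.exp (2 * Real.pi * Complex.I / (2 * (e : ℂ)))
noncomputable def ωC (e : ℕ) : ℂ := Complex.exp (Real.pi * Complex.I / (2 * (e : ℂ)))
noncomputable def ρR (e j : ℕ) : ℝ := 2 * Real.cos (Real.pi * j / (2 * e))

lemma zC_prim {e : ℕ} (he : 1 ≤ e) : IsPrimitiveRoot (zC e) (2 * e) := by
  have h := Complex.isPrimitiveRoot_exp (2 * e) (by omega)
  have : ((2 * e : ℕ) : ℂ) = 2 * (e : ℂ) := by push_cast; ring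
  rwa [zC, ← this]

lemma ωC_ne_zero (e : ℕ) : ωC e ≠ 0 := Complex.exp_ne_zero _

lemma zC_ne_zero (e : ℕ) : zC e ≠ 0 := Complex.exp_ne_zero _

lemma ω_sq (e : ℕ) : ωC e ^ 2 = zC e := by
  rw [ωC, zC, ← Complex.exp_nat_mul]
  congr 1
  push_cast
  ring

lemma zC_pow_e {e : ℕ} (he : 1 ≤ e) : zC e ^ e = -1 := by
  rw [zC, ← Complex.exp_nat_mul]
  have he' : (e : ℂ) ≠ 0 := Nat.cast_ne_zero.mpr (by omega)
  have h : (e : ℂ) * (2 * Real.pi * Complex.I / (2 * e)) = Real.pi * Complex.I := by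
    field_simp
  rw [h, Complex.exp_pi_mul_I]

lemma zC_pow_eq_neg_one_iff {e : ℕ} (he : 1 ≤ e) (j : ℕ) :
    zC e ^ j = -1 ↔ 2 * e ∣ j + e := by
  constructor
  · intro h
    have h1 : zC e ^ (j + e) = 1 := by rw [pow_add, h, zC_pow_e he]; ring
    exact ((zC_prim he).pow_eq_one_iff_dvd _).mp h1
  · intro hdvd
    have h1 : zC e ^ (j + e) = 1 := ((zC_prim he).pow_eq_one_iff_dvd _).mpr hdvd
    rw [pow_add, zC_pow_e he] at h1
    linear_combination -h1

lemma one_add_zC_pow (e j : ℕ) : 1 + zC e ^ j = (ρR e j : ℂ) * ωC e ^ j := by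
  set θ : ℂ := ((Real.pi * j / (2 * e) : ℝ) : ℂ) with hθ
  have hω : ωC e ^ j = Complex.exp (θ * Complex.I) := by
    rw [ωC, ← Complex.exp_nat_mul]
    congr 1
    rw [hθ]
    push_cast
    ring
  have hz : zC e ^ j = Complex.exp (θ * Complex.I) ^ 2 := by
    rw [← hω, ← ω_sq e]
    ring
  have hρ : (ρR e j : ℂ) = Complex.exp (θ * Complex.I) + Complex.exp (-θ * Complex.I) := by
    rw [ρR]
    push_cast [Complex.ofReal_cos]
    rw [Complex.two_cos]
    congr 2 <;> (rw [hθ]; push_cast; ring)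
  have hba : Complex.exp (-θ * Complex.I) * Complex.exp (θ * Complex.I) = 1 := by
    rw [← Complex.exp_add]
    ring_nf
    exact Complex.exp_zero
  rw [hρ, hω, add_mul, hba, ← sq, ← hz, add_comm]

lemma ρR_pos {e j : ℕ} (he : 1 ≤ e) (hj : j < e) : 0 < ρR e j := by
  have he' : (0:ℝ) < e := by exact_mod_cast he
  have hπ : (0:ℝ) < Real.pi := Real.pi_pos
  rw [ρR]
  apply mul_pos two_pos
  apply Real.cos_pos_of_mem_Ioo
  constructor
  · have h0 : (0:ℝ) ≤ Real.pi * j / (2*e) := by positivity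
    linarith
  · rw [div_lt_div_iff₀ (by positivity) (by norm_num)]
    have hj' : (j:ℝ) < e := by exact_mod_cast hj
    nlinarith

lemma ρR_ne_zero {e j : ℕ} (he : 1 ≤ e) (hj : ¬ 2 * e ∣ j + e) : ρR e j ≠ 0 := by
  intro h0
  have h1 := one_add_zC_pow e j
  rw [h0] at h1
  simp only [Complex.ofReal_zero, zero_mul] at h1
  have h2 : zC e ^ j = -1 := by linear_combination h1
  exact hj ((zC_pow_eq_neg_one_iff he j).mp h2)

end GcdAux

namespace GcdAux

lemma pow_dvd_prod_one_add_X_pow {R : Type*} [CommRing R] (n e : ℕ)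
    (w : Polynomial R) (hw : ∀ j ∈ Sf n e, w ∣ 1 + Polynomial.X ^ j) (a : ℕ → ℕ) :
    w ^ (∑ j ∈ Sf n e, a j) ∣ ∏ j ∈ Finset.Icc 1 n, (1 + Polynomial.X ^ j) ^ a j := by
  have hsplit := Finset.prod_filter_mul_prod_filter_not (Finset.Icc 1 n)
      (fun j => 2 * e ∣ j + e) (fun j => ((1 + Polynomial.X ^ j : Polynomial R)) ^ a j)
  rw [← hsplit]
  apply Dvd.dvd.mul_right
  rw [← Finset.prod_pow_eq_pow_sum]
  exact Finset.prod_dvd_prod_of_dvd _ _ fun j hj => pow_dvd_pow_of_dvd (hw j hj) _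

lemma part_lt_e {n e : ℕ} (he : 1 ≤ e) (ν : Nat.Partition (n % e)) {p : ℕ}
    (hp : p ∈ ν.parts) : p < e := by
  have h := (Finset.mem_Icc.mp (parts_mem_Icc ν hp)).2
  have := Nat.mod_lt n (show 0 < e by omega)
  omega

lemma count_eq_zero_of_small {n e j : ℕ} (he : 1 ≤ e) (ν : Nat.Partition (n % e))
    (hj : e ≤ j) : ν.parts.count j = 0 := by
  rw [Multiset.count_eq_zero]
  intro hmem
  exact absurd (part_lt_e he ν hmem) (by omega)

def toBig (n e : ℕ) (he : 1 ≤ e) (ν : Nat.Partition (n % e)) : Nat.Partition n where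
  parts := ν.parts + Multiset.replicate (n / e) e
  parts_pos := by
    intro i hi
    rcases Multiset.mem_add.mp hi with h | h
    · exact ν.parts_pos h
    · rw [Multiset.eq_of_mem_replicate h]; omega
  parts_sum := by
    rw [Multiset.sum_add, ν.parts_sum, Multiset.sum_replicate, smul_eq_mul]
    have hdm := Nat.div_add_mod' n e
    omega

lemma toBig_count {n e : ℕ} (he : 1 ≤ e) (ν : Nat.Partition (n % e)) (j : ℕ) :
    (toBig n e he ν).parts.count j = ν.parts.count j + if e = j then n / e else 0 := by
  show (ν.parts + Multiset.replicate (n / e) e).count j = _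
  rw [Multiset.count_add, Multiset.count_replicate]

lemma count_e_toBig {n e : ℕ} (he : 1 ≤ e) (ν : Nat.Partition (n % e)) :
    (toBig n e he ν).parts.count e = n / e := by
  rw [toBig_count he, count_eq_zero_of_small he ν le_rfl, if_pos rfl, zero_add]

def toSmall (n e : ℕ) (μ : Nat.Partition n) (h : μ.parts.count e = n / e) :
    Nat.Partition (n % e) where
  parts := μ.parts.filter (· ≠ e)
  parts_pos := fun hi => μ.parts_pos (Multiset.mem_of_mem_filter hi)
  parts_sum := by
    have hsplit : μ.parts.filter (· = e) + μ.parts.filter (· ≠ e) = μ.parts := by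
      have := Multiset.filter_add_not (fun a => a = e) μ.parts
      simpa using this
    have h1 : μ.parts.filter (· = e) = Multiset.replicate (n / e) e := by
      rw [Multiset.filter_eq', h]
    have h2 := congrArg Multiset.sum hsplit
    rw [Multiset.sum_add, h1, Multiset.sum_replicate, μ.parts_sum, smul_eq_mul] at h2
    have hdm := Nat.div_add_mod' n e
    omega

lemma toBig_toSmall {n e : ℕ} (he : 1 ≤ e) (μ : Nat.Partition n)
    (h : μ.parts.count e = n / e) : toBig n e he (toSmall n e μ h) = μ := by
  apply Nat.Partition.ext
  show μ.parts.filter (· ≠ e) + Multiset.replicate (n / e) e = μ.parts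
  rw [← h, ← Multiset.filter_eq']
  rw [add_comm]
  have := Multiset.filter_add_not (fun a => a = e) μ.parts
  simpa using this

lemma toSmall_toBig {n e : ℕ} (he : 1 ≤ e) (ν : Nat.Partition (n % e))
    (h : (toBig n e he ν).parts.count e = n / e) :
    toSmall n e (toBig n e he ν) h = ν := by
  apply Nat.Partition.ext
  show (ν.parts + Multiset.replicate (n / e) e).filter (· ≠ e) = ν.parts
  rw [Multiset.filter_add]
  have h1 : (Multiset.replicate (n / e) e).filter (· ≠ e) = 0 := by
    rw [Multiset.filter_eq_nil]
    intro a ha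
    simp [Multiset.eq_of_mem_replicate ha]
  have h2 : ν.parts.filter (· ≠ e) = ν.parts := by
    rw [Multiset.filter_eq_self]
    intro a ha
    exact Nat.ne_of_lt (part_lt_e he ν ha)
  rw [h1, h2, add_zero]

lemma toSmall_count {n e : ℕ} (μ : Nat.Partition n) (h : μ.parts.count e = n / e)
    {j : ℕ} (hj : j ≠ e) : (toSmall n e μ h).parts.count j = μ.parts.count j := by
  show (μ.parts.filter (· ≠ e)).count j = _
  rw [Multiset.count_filter, if_pos hj]

end GcdAux

namespace GcdAux

def Tf (n e : ℕ) : Finset ℕ := (Finset.Icc 1 n).filter (fun j => ¬ 2 * e ∣ j + e)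

noncomputable def Qp (n e : ℕ) (ν : Nat.Partition (n % e)) : Polynomial ℂ :=
  ∏ j ∈ Tf n e, (1 + Polynomial.X ^ j) ^ (n / j - ν.parts.count j)

noncomputable def Pp (n e : ℕ) : Polynomial ℂ :=
  ∏ j ∈ (Sf n e).erase e, (1 + Polynomial.X ^ j) ^ (n / j)

def mval (n e : ℕ) : ℕ := ∑ j ∈ (Sf n e).erase e, n / j

noncomputable def Rval (n e : ℕ) (ν : Nat.Partition (n % e)) : ℝ :=
  ∏ j ∈ Tf n e, (ρR e j) ^ (n / j - ν.parts.count j)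

def tsum (n e : ℕ) (ν : Nat.Partition (n % e)) : ℕ :=
  ∑ j ∈ Tf n e, j * (n / j - ν.parts.count j)

lemma part_mem_Tf {n e : ℕ} (he : 1 ≤ e) (ν : Nat.Partition (n % e)) {p : ℕ}
    (hp : p ∈ ν.parts) : p ∈ Tf n e := by
  have h1 := Finset.mem_Icc.mp (parts_mem_Icc ν hp)
  have hlt : p < e := part_lt_e he ν hp
  rw [Tf, Finset.mem_filter, Finset.mem_Icc]
  refine ⟨⟨h1.1, le_trans h1.2 (Nat.mod_le n e)⟩, ?_⟩
  rintro ⟨k, hk⟩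
  rcases Nat.eq_zero_or_pos k with rfl | hk0
  · omega
  · have : 2 * e * 1 ≤ 2 * e * k := Nat.mul_le_mul_left _ hk0
    omega

lemma count_le_div_Tf {n e : ℕ} (ν : Nat.Partition (n % e)) {j : ℕ} (hj : j ∈ Tf n e) :
    ν.parts.count j ≤ n / j := by
  have h1 := (Finset.mem_Icc.mp (Finset.mem_filter.mp hj).1).1
  exact le_trans (count_le_div ν h1) (Nat.div_le_div_right (Nat.mod_le n e))

lemma tsum_add_eq {n e : ℕ} (he : 1 ≤ e) (ν : Nat.Partition (n % e)) :
    tsum n e ν + n % e = ∑ j ∈ Tf n e, j * (n / j) := by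
  have hsum : ∑ j ∈ Tf n e, j * ν.parts.count j = n % e := by
    calc ∑ j ∈ Tf n e, j * ν.parts.count j = ν.parts.sum :=
          sum_count_eq (fun p hp => part_mem_Tf he ν hp)
      _ = n % e := ν.parts_sum
  calc tsum n e ν + n % e
      = (∑ j ∈ Tf n e, j * (n / j - ν.parts.count j))
        + ∑ j ∈ Tf n e, j * ν.parts.count j := by rw [tsum, hsum]
    _ = ∑ j ∈ Tf n e, (j * (n / j - ν.parts.count j) + j * ν.parts.count j) := by
        rw [Finset.sum_add_distrib]
    _ = ∑ j ∈ Tf n e, j * (n / j) := Finset.sum_congr rfl fun j hj => by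
        rw [← Nat.mul_add, Nat.sub_add_cancel (count_le_div_Tf ν hj)]

lemma evalQ {n e : ℕ} (ν : Nat.Partition (n % e)) :
    Polynomial.eval (zC e) (Qp n e ν)
      = ((Rval n e ν : ℝ) : ℂ) * ωC e ^ (tsum n e ν) := by
  rw [Qp, Polynomial.eval_prod]
  have h1 : ∀ j ∈ Tf n e,
      Polynomial.eval (zC e) ((1 + Polynomial.X ^ j) ^ (n / j - ν.parts.count j))
      = ((ρR e j : ℝ) : ℂ) ^ (n / j - ν.parts.count j)
        * (ωC e ^ j) ^ (n / j - ν.parts.count j) := by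
    intro j _
    rw [Polynomial.eval_pow, Polynomial.eval_add, Polynomial.eval_one, Polynomial.eval_pow,
      Polynomial.eval_X, one_add_zC_pow, mul_pow]
  rw [Finset.prod_congr rfl h1, Finset.prod_mul_distrib]
  congr 1
  · rw [Rval]
    push_cast
    rfl
  · rw [Finset.prod_congr rfl (fun j _ => by rw [← pow_mul]),
      Finset.prod_pow_eq_pow_sum, tsum]

lemma Rval_factor {n e : ℕ} (ν : Nat.Partition (n % e)) :
    Rval n e ν = (∏ j ∈ (Tf n e).filter (fun j => j ≤ n % e),
        ρR e j ^ (n / j - ν.parts.count j))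
      * (∏ j ∈ (Tf n e).filter (fun j => ¬ j ≤ n % e), ρR e j ^ (n / j)) := by
  rw [Rval, ← Finset.prod_filter_mul_prod_filter_not (Tf n e) (fun j => j ≤ n % e)]
  congr 1
  apply Finset.prod_congr rfl
  intro j hj
  have hj2 := (Finset.mem_filter.mp hj).2
  have h0 : ν.parts.count j = 0 := by
    rw [Multiset.count_eq_zero]
    intro hmem
    exact hj2 (Finset.mem_Icc.mp (parts_mem_Icc ν hmem)).2
  rw [h0, Nat.sub_zero]

lemma sum_Rval_ne_zero (n e : ℕ) (he : 1 ≤ e) :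
    (∑ ν : Nat.Partition (n % e), Rval n e ν) ≠ 0 := by
  have hmod : n % e < e := Nat.mod_lt n (by omega)
  have hK : (∏ j ∈ (Tf n e).filter (fun j => ¬ j ≤ n % e), ρR e j ^ (n / j)) ≠ 0 := by
    rw [Finset.prod_ne_zero_iff]
    intro j hj
    have hnd := (Finset.mem_filter.mp ((Finset.mem_filter.mp hj).1)).2
    exact pow_ne_zero _ (ρR_ne_zero he hnd)
  have hsplit : ∑ ν : Nat.Partition (n % e), Rval n e ν
      = (∑ ν : Nat.Partition (n % e), ∏ j ∈ (Tf n e).filter (fun j => j ≤ n % e),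
          ρR e j ^ (n / j - ν.parts.count j))
        * (∏ j ∈ (Tf n e).filter (fun j => ¬ j ≤ n % e), ρR e j ^ (n / j)) := by
    rw [Finset.sum_mul]
    exact Finset.sum_congr rfl fun ν _ => Rval_factor ν
  rw [hsplit]
  apply mul_ne_zero _ hK
  have hne : (Finset.univ : Finset (Nat.Partition (n % e))).Nonempty :=
    ⟨Nat.Partition.indiscrete _, Finset.mem_univ _⟩
  apply ne_of_gt
  apply Finset.sum_pos _ hne
  intro ν _
  apply Finset.prod_pos
  intro j hj
  have hle := (Finset.mem_filter.mp hj).2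
  exact pow_pos (ρR_pos he (by omega)) _

lemma eval_sum_Q_ne_zero (n e : ℕ) (he : 1 ≤ e) :
    Polynomial.eval (zC e) (∑ ν : Nat.Partition (n % e), Qp n e ν) ≠ 0 := by
  have htv : ∀ ν : Nat.Partition (n % e),
      tsum n e ν = (∑ j ∈ Tf n e, j * (n / j)) - n % e := by
    intro ν
    have := tsum_add_eq he ν
    omega
  rw [Polynomial.eval_finset_sum]
  have h1 : ∀ ν ∈ (Finset.univ : Finset (Nat.Partition (n % e))),
      Polynomial.eval (zC e) (Qp n e ν)
      = ((Rval n e ν : ℝ) : ℂ) * ωC e ^ ((∑ j ∈ Tf n e, j * (n / j)) - n % e) := by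
    intro ν _
    rw [evalQ, htv]
  rw [Finset.sum_congr rfl h1, ← Finset.sum_mul]
  apply mul_ne_zero
  · rw [← Complex.ofReal_sum]
    exact Complex.ofReal_ne_zero.mpr (sum_Rval_ne_zero n e he)
  · exact pow_ne_zero _ (ωC_ne_zero e)

lemma one_add_X_pow_ne_zero {j : ℕ} (hj : 1 ≤ j) :
    (1 + Polynomial.X ^ j : Polynomial ℂ) ≠ 0 := by
  intro h
  have h0 := congrArg (Polynomial.eval 0) h
  rw [Polynomial.eval_add, Polynomial.eval_one, Polynomial.eval_pow, Polynomial.eval_X,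
    zero_pow (by omega), Polynomial.eval_zero, add_zero] at h0
  exact one_ne_zero h0

lemma rootMult_pow {p : Polynomial ℂ} (hp : p ≠ 0) (z : ℂ) (k : ℕ) :
    Polynomial.rootMultiplicity z (p ^ k) = k * Polynomial.rootMultiplicity z p := by
  induction k with
  | zero =>
    rw [pow_zero, zero_mul]
    apply Polynomial.rootMultiplicity_eq_zero
    simp [Polynomial.IsRoot]
  | succ k ih =>
    rw [pow_succ, Polynomial.rootMultiplicity_mul (mul_ne_zero (pow_ne_zero _ hp) hp), ih]
    ring

lemma rootMult_prod {ι : Type*} {s : Finset ι} {f : ι → Polynomial ℂ}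
    (h : ∀ i ∈ s, f i ≠ 0) (z : ℂ) :
    Polynomial.rootMultiplicity z (∏ i ∈ s, f i)
      = ∑ i ∈ s, Polynomial.rootMultiplicity z (f i) := by
  classical
  induction s using Finset.induction_on with
  | empty =>
    simp only [Finset.prod_empty, Finset.sum_empty]
    apply Polynomial.rootMultiplicity_eq_zero
    simp [Polynomial.IsRoot]
  | @insert a s ha ih =>
    rw [Finset.prod_insert ha, Finset.sum_insert ha,
      Polynomial.rootMultiplicity_mul (mul_ne_zero (h a (Finset.mem_insert_self a s))
        (Finset.prod_ne_zero_iff.mpr fun i hi => h i (Finset.mem_insert_of_mem hi))),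
      ih fun i hi => h i (Finset.mem_insert_of_mem hi)]

lemma rootMult_one_add {e : ℕ} (he : 1 ≤ e) {j : ℕ} (hj1 : 1 ≤ j) (hdvd : 2 * e ∣ j + e) :
    Polynomial.rootMultiplicity (zC e) (1 + Polynomial.X ^ j) = 1 := by
  have hzj : zC e ^ j = -1 := (zC_pow_eq_neg_one_iff he j).mpr hdvd
  have hroot : Polynomial.IsRoot (1 + Polynomial.X ^ j) (zC e) := by
    simp [Polynomial.IsRoot, hzj]
  have hne := one_add_X_pow_ne_zero hj1
  refine le_antisymm ?_ ((Polynomial.rootMultiplicity_pos hne).mpr hroot)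
  rw [Polynomial.rootMultiplicity_le_iff hne]
  rintro ⟨q, hq⟩
  have hder := congrArg Polynomial.derivative hq
  rw [Polynomial.derivative_add, Polynomial.derivative_one, Polynomial.derivative_X_pow,
    Polynomial.derivative_mul, Polynomial.derivative_pow] at hder
  have heval := congrArg (Polynomial.eval (zC e)) hder
  simp only [Polynomial.eval_mul, Polynomial.eval_add, Polynomial.eval_pow,
    Polynomial.eval_sub, Polynomial.eval_X, Polynomial.eval_C, Polynomial.eval_one,
    zero_add, sub_self, Polynomial.eval_natCast] at heval
  norm_num at heval
  rcases heval with h | ⟨h, _⟩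
  · omega
  · exact zC_ne_zero e h

lemma rootMult_Pp (n e : ℕ) (he : 1 ≤ e) :
    Polynomial.rootMultiplicity (zC e) (Pp n e) = mval n e := by
  have hne : ∀ j ∈ (Sf n e).erase e, ((1 + Polynomial.X ^ j : Polynomial ℂ)) ^ (n / j) ≠ 0 :=
    fun j hj => pow_ne_zero _
      (one_add_X_pow_ne_zero (mem_Sf.mp (Finset.mem_of_mem_erase hj)).1.1)
  rw [Pp, rootMult_prod hne, mval]
  apply Finset.sum_congr rfl
  intro j hj
  have hjS := Finset.mem_of_mem_erase hj
  have h1 := (mem_Sf.mp hjS).1.1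
  rw [rootMult_pow (one_add_X_pow_ne_zero h1),
    rootMult_one_add he h1 (mem_Sf.mp hjS).2, mul_one]

lemma Pp_ne_zero (n e : ℕ) : Pp n e ≠ 0 := by
  rw [Pp]
  apply Finset.prod_ne_zero_iff.mpr
  intro j hj
  exact pow_ne_zero _
    (one_add_X_pow_ne_zero (mem_Sf.mp (Finset.mem_of_mem_erase hj)).1.1)

end GcdAux

namespace GcdAux

open Polynomial

set_option maxHeartbeats 2000000 in
theorem key (n e : ℕ) (he : 1 ≤ e) (hen : e ≤ n) :
    ¬ ((Polynomial.X - Polynomial.C (zC e)) ^ (mval n e + 1) ∣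
      Polynomial.map (Int.castRingHom ℂ)
        (∑ μ : Nat.Partition n, hPoly n μ)) := by
  intro hdvd
  -- rewrite the mapped sum explicitly
  have hmapped : Polynomial.map (Int.castRingHom ℂ) (∑ μ : Nat.Partition n, hPoly n μ)
      = ∑ μ : Nat.Partition n, ∏ j ∈ Finset.Icc 1 n,
          ((1 + Polynomial.X ^ j : Polynomial ℂ)) ^ (n / j - μ.parts.count j) := by
    rw [Polynomial.map_sum]
    refine Finset.sum_congr rfl fun μ _ => ?_
    rw [hPoly, Polynomial.map_prod]
    refine Finset.prod_congr rfl fun j _ => ?_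
    rw [Polynomial.map_pow, Polynomial.map_add, Polynomial.map_one, Polynomial.map_pow,
      Polynomial.map_X]
  rw [hmapped, ← Finset.sum_filter_add_sum_filter_not Finset.univ
      (fun μ : Nat.Partition n => μ.parts.count e = n / e)] at hdvd
  -- the non-maximizing part is divisible
  have hw : ∀ j ∈ Sf n e, (Polynomial.X - Polynomial.C (zC e)) ∣
      (1 + Polynomial.X ^ j : Polynomial ℂ) := by
    intro j hj
    rw [Polynomial.dvd_iff_isRoot]
    have hz : zC e ^ j = -1 := (zC_pow_eq_neg_one_iff he j).mpr (mem_Sf.mp hj).2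
    simp [Polynomial.IsRoot, hz]
  have hnotA : (Polynomial.X - Polynomial.C (zC e)) ^ (mval n e + 1) ∣
      ∑ μ ∈ Finset.univ.filter (fun μ : Nat.Partition n => ¬ μ.parts.count e = n / e),
        ∏ j ∈ Finset.Icc 1 n,
          ((1 + Polynomial.X ^ j : Polynomial ℂ)) ^ (n / j - μ.parts.count j) := by
    apply Finset.dvd_sum
    intro μ hμ
    have hcount := (Finset.mem_filter.mp hμ).2
    have hclt : csum n e μ < n / e := by
      rcases lt_or_eq_of_le (csum_le he μ) with h | h
      · exact h
      · exact absurd (count_e_of_csum_eq he hen μ h) hcount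
    have hsub : ∑ j ∈ Sf n e, (n / j - μ.parts.count j)
        = (∑ j ∈ Sf n e, n / j) - csum n e μ := by
      rw [csum]
      exact Finset.sum_tsub_distrib (Sf n e) fun j hj =>
        count_le_div μ (mem_Sf.mp hj).1.1
    have hSfsum : ∑ j ∈ Sf n e, n / j = n / e + mval n e := by
      rw [mval]
      exact (Finset.add_sum_erase _ _ (e_mem_Sf he hen)).symm
    have hle : mval n e + 1 ≤ ∑ j ∈ Sf n e, (n / j - μ.parts.count j) := by
      rw [hsub, hSfsum]
      omega
    exact (pow_dvd_pow _ hle).trans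
      (pow_dvd_prod_one_add_X_pow n e _ hw (fun j => n / j - μ.parts.count j))
  have hA : (Polynomial.X - Polynomial.C (zC e)) ^ (mval n e + 1) ∣
      ∑ μ ∈ Finset.univ.filter (fun μ : Nat.Partition n => μ.parts.count e = n / e),
        ∏ j ∈ Finset.Icc 1 n,
          ((1 + Polynomial.X ^ j : Polynomial ℂ)) ^ (n / j - μ.parts.count j) :=
    (dvd_add_left hnotA).mp hdvd
  -- reindex the maximizing part
  have hSA : ∑ μ ∈ Finset.univ.filter (fun μ : Nat.Partition n => μ.parts.count e = n / e),
      ∏ j ∈ Finset.Icc 1 n,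
        ((1 + Polynomial.X ^ j : Polynomial ℂ)) ^ (n / j - μ.parts.count j)
      = Pp n e * ∑ ν : Nat.Partition (n % e), Qp n e ν := by
    rw [Finset.mul_sum]
    refine Finset.sum_bij' (i := fun μ hμ => toSmall n e μ (Finset.mem_filter.mp hμ).2)
      (j := fun ν _ => toBig n e he ν) (fun μ hμ => Finset.mem_univ _)
      (fun ν _ => Finset.mem_filter.mpr ⟨Finset.mem_univ _, count_e_toBig he ν⟩)
      (fun μ hμ => toBig_toSmall he μ (Finset.mem_filter.mp hμ).2)
      (fun ν hν => toSmall_toBig he ν _) ?_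
    intro μ hμ
    have hcnt := (Finset.mem_filter.mp hμ).2
    rw [← Finset.prod_filter_mul_prod_filter_not (Finset.Icc 1 n) (fun j => 2 * e ∣ j + e)
      (fun j => ((1 + Polynomial.X ^ j : Polynomial ℂ)) ^ (n / j - μ.parts.count j))]
    congr 1
    · show ∏ j ∈ Sf n e, ((1 + Polynomial.X ^ j : Polynomial ℂ)) ^ (n / j - μ.parts.count j)
        = Pp n e
      rw [← Finset.mul_prod_erase (Sf n e) _ (e_mem_Sf he hen), hcnt, Nat.sub_self, pow_zero,
        one_mul, Pp]
      refine Finset.prod_congr rfl fun j hj => ?_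
      rw [count_erase_eq_zero he μ hcnt hj, Nat.sub_zero]
    · show ∏ j ∈ Tf n e, ((1 + Polynomial.X ^ j : Polynomial ℂ)) ^ (n / j - μ.parts.count j)
        = Qp n e (toSmall n e μ hcnt)
      rw [Qp]
      refine Finset.prod_congr rfl fun j hj => ?_
      have hje : j ≠ e := by
        intro h
        exact (Finset.mem_filter.mp hj).2 (h ▸ ⟨1, by ring⟩)
      rw [toSmall_count μ hcnt hje]
  rw [hSA] at hA
  -- contradiction via root multiplicities
  have hQne : (∑ ν : Nat.Partition (n % e), Qp n e ν) ≠ 0 := by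
    intro h0
    apply eval_sum_Q_ne_zero n e he
    rw [h0, Polynomial.eval_zero]
  have hPQne : Pp n e * (∑ ν : Nat.Partition (n % e), Qp n e ν) ≠ 0 :=
    mul_ne_zero (Pp_ne_zero n e) hQne
  have hm := (Polynomial.le_rootMultiplicity_iff hPQne).mpr hA
  rw [Polynomial.rootMultiplicity_mul hPQne, rootMult_Pp n e he,
    Polynomial.rootMultiplicity_eq_zero (fun hr => eval_sum_Q_ne_zero n e he hr)] at hm
  omega

end GcdAux

namespace GcdAux

lemma one_add_X_pow_ne_zero_int {j : ℕ} (hj : 1 ≤ j) :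
    (1 + Polynomial.X ^ j : Polynomial ℤ) ≠ 0 := by
  intro h
  have h0 := congrArg (Polynomial.eval 0) h
  rw [Polynomial.eval_add, Polynomial.eval_one, Polynomial.eval_pow, Polynomial.eval_X,
    zero_pow (by omega), Polynomial.eval_zero, add_zero] at h0
  exact one_ne_zero h0

end GcdAux

open GcdAux

/-- For every integer `n ≥ 1`, the polynomials `num(n,x)` and `den(n,x)` are coprime
in `ℤ[x]`, i.e. `gcd(num(n,x), den(n,x)) = 1`. -/
theorem gcd_numPoly_denPoly_eq_one (n : ℕ) (hn : 1 ≤ n) :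
    gcd (numPoly n) (denPoly n) = 1 := by
  rw [← _root_.normalize_gcd, normalize_eq_one]
  by_contra hunit
  have hsum_spec : (∑ μ : Nat.Partition n, hPoly n μ) = GPoly n * numPoly n :=
    (GPoly_dvd_sum n).choose_spec
  have hprod_spec : (∏ i ∈ Finset.Icc 1 n, ((1 : Polynomial ℤ) + X ^ i) ^ (n / i))
      = GPoly n * denPoly n := (GPoly_dvd_prod n).choose_spec
  have hprod_ne : (∏ i ∈ Finset.Icc 1 n, ((1 : Polynomial ℤ) + X ^ i) ^ (n / i)) ≠ 0 := by
    apply Finset.prod_ne_zero_iff.mpr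
    intro i hi
    exact pow_ne_zero _ (one_add_X_pow_ne_zero_int (Finset.mem_Icc.mp hi).1)
  have hden_ne : denPoly n ≠ 0 := by
    intro h
    apply hprod_ne
    rw [hprod_spec, h, mul_zero]
  have hgcd0 : gcd (numPoly n) (denPoly n) ≠ 0 := by
    intro h
    exact hden_ne ((gcd_eq_zero_iff _ _).mp h).2
  obtain ⟨p, hpirr, hpdvd⟩ := WfDvdMonoid.exists_irreducible_factor hunit hgcd0
  have hpnum : p ∣ numPoly n := hpdvd.trans (gcd_dvd_left _ _)
  have hpden : p ∣ denPoly n := hpdvd.trans (gcd_dvd_right _ _)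
  have hpprime : Prime p := UniqueFactorizationMonoid.irreducible_iff_prime.mp hpirr
  have hpprod : p ∣ ∏ i ∈ Finset.Icc 1 n, ((1 : Polynomial ℤ) + X ^ i) ^ (n / i) :=
    hpden.trans (Dvd.intro_left _ hprod_spec.symm)
  obtain ⟨i0, hi0mem, hpi0pow⟩ := hpprime.exists_mem_finset_dvd hpprod
  have hpi0 : p ∣ 1 + X ^ i0 := hpprime.dvd_of_dvd_pow hpi0pow
  obtain ⟨hi01, hi0n⟩ := Finset.mem_Icc.mp hi0mem
  have hfac : (X ^ (2 * i0) - 1 : Polynomial ℤ) = (X ^ i0 - 1) * (1 + X ^ i0) := by ring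
  have hpX : p ∣ X ^ (2 * i0) - 1 := hfac ▸ (hpi0.mul_left _)
  rw [← Polynomial.prod_cyclotomic_eq_X_pow_sub_one (by omega) ℤ] at hpX
  obtain ⟨d, hdmem, hpd⟩ := hpprime.exists_mem_finset_dvd hpX
  obtain ⟨hddvd, h2i0ne⟩ := Nat.mem_divisors.mp hdmem
  have hd0 : 0 < d := Nat.pos_of_mem_divisors hdmem
  have hΦirr := Polynomial.cyclotomic.irreducible hd0
  have hΦdvd_p : Polynomial.cyclotomic d ℤ ∣ p := (hpirr.associated_of_dvd hΦirr hpd).symm.dvd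
  have hndvd : ¬ d ∣ i0 := by
    intro hdi0
    have h1 : Polynomial.cyclotomic d ℤ ∣ X ^ i0 - 1 := by
      rw [← Polynomial.prod_cyclotomic_eq_X_pow_sub_one (by omega) ℤ]
      exact Finset.dvd_prod_of_mem _ (Nat.mem_divisors.mpr ⟨hdi0, by omega⟩)
    have hp1 : p ∣ X ^ i0 - 1 := hpd.trans h1
    have hp2 : p ∣ (2 : Polynomial ℤ) := by
      have h2eq : (2 : Polynomial ℤ) = (1 + X ^ i0) - (X ^ i0 - 1) := by ring
      rw [h2eq]
      exact dvd_sub hpi0 hp1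
    have hdeg : p.natDegree = 0 := by
      have h2ne : (2 : Polynomial ℤ) ≠ 0 := by norm_num
      have h := Polynomial.natDegree_le_of_dvd hp2 h2ne
      have h2deg : (2 : Polynomial ℤ).natDegree = 0 := Polynomial.natDegree_ofNat 2
      omega
    have hc := Polynomial.eq_C_of_natDegree_eq_zero hdeg
    have hcdvd : p.coeff 0 ∣ (1 + X ^ i0 : Polynomial ℤ).coeff 0 :=
      (Polynomial.C_dvd_iff_dvd_coeff _ _).mp (hc ▸ hpi0) 0
    have hcoeff : (1 + X ^ i0 : Polynomial ℤ).coeff 0 = 1 := by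
      rw [Polynomial.coeff_add, Polynomial.coeff_one, Polynomial.coeff_X_pow]
      have h00 : ¬ (0 = i0) := by omega
      simp [h00]
    rw [hcoeff] at hcdvd
    exact hpirr.not_isUnit (hc ▸ Polynomial.isUnit_C.mpr (isUnit_of_dvd_one hcdvd))
  have h2d : 2 ∣ d := by
    rcases Nat.even_or_odd d with h | h
    · exact h.two_dvd
    · exact absurd (Nat.Coprime.dvd_of_dvd_mul_left h.coprime_two_right hddvd) hndvd
  obtain ⟨e, hde⟩ := h2d
  have he1 : 1 ≤ e := by omega
  have hei0 : e ∣ i0 := by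
    have h := hddvd
    rw [hde] at h
    exact Nat.dvd_of_mul_dvd_mul_left (by norm_num) h
  have hen : e ≤ n := le_trans (Nat.le_of_dvd (by omega) hei0) hi0n
  -- cyclotomic (2e) divides each 1 + X^j for j ∈ Sf
  have hΦprime : Prime (Polynomial.cyclotomic (2 * e) ℤ) :=
    UniqueFactorizationMonoid.irreducible_iff_prime.mp
      (Polynomial.cyclotomic.irreducible (by omega))
  have hΦdvd1 : ∀ j ∈ Sf n e, Polynomial.cyclotomic (2 * e) ℤ ∣ 1 + X ^ j := by
    intro j hj
    obtain ⟨⟨hj1, hjn⟩, hjd⟩ := mem_Sf.mp hj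
    have h2j : 2 * e ∣ 2 * j := by
      have h1 : 2 * e ∣ (j + e) + (j + e) := dvd_add hjd hjd
      have h2 := Nat.dvd_sub h1 (dvd_refl (2 * e))
      have h3 : (j + e) + (j + e) - 2 * e = 2 * j := by omega
      rwa [h3] at h2
    have hΦX : Polynomial.cyclotomic (2 * e) ℤ ∣ X ^ (2 * j) - 1 := by
      rw [← Polynomial.prod_cyclotomic_eq_X_pow_sub_one (by omega) ℤ]
      exact Finset.dvd_prod_of_mem _ (Nat.mem_divisors.mpr ⟨h2j, by omega⟩)
    have hsplit : (X ^ (2 * j) - 1 : Polynomial ℤ) = (X ^ j - 1) * (1 + X ^ j) := by ring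
    rw [hsplit] at hΦX
    rcases (hΦprime.dvd_mul).mp hΦX with h | h
    · exfalso
      have hmap : Polynomial.cyclotomic (2 * e) ℂ ∣ (X ^ j - 1 : Polynomial ℂ) := by
        have hh := Polynomial.map_dvd (Int.castRingHom ℂ) h
        rwa [Polynomial.map_cyclotomic, Polynomial.map_sub, Polynomial.map_pow,
          Polynomial.map_X, Polynomial.map_one] at hh
      obtain ⟨q, hq⟩ := hmap
      have heval := congrArg (Polynomial.eval (zC e)) hq
      have hroot : (Polynomial.cyclotomic (2 * e) ℂ).eval (zC e) = 0 :=
        (zC_prim he1).isRoot_cyclotomic (by omega)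
      rw [Polynomial.eval_sub, Polynomial.eval_pow, Polynomial.eval_X, Polynomial.eval_one,
        Polynomial.eval_mul, hroot, zero_mul,
        (zC_pow_eq_neg_one_iff he1 j).mpr hjd] at heval
      norm_num at heval
    · exact h
  -- cyclotomic(2e)^mval divides GPoly
  have hΦG : (Polynomial.cyclotomic (2 * e) ℤ) ^ (mval n e) ∣ GPoly n := by
    rw [GPoly]
    apply Finset.dvd_gcd
    intro μ _
    have hsub : ∑ j ∈ Sf n e, (n / j - μ.parts.count j)
        = (∑ j ∈ Sf n e, n / j) - csum n e μ := by
      rw [csum]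
      exact Finset.sum_tsub_distrib (Sf n e) fun j hj => count_le_div μ (mem_Sf.mp hj).1.1
    have hSfsum : ∑ j ∈ Sf n e, n / j = n / e + mval n e := by
      rw [mval]
      exact (Finset.add_sum_erase _ _ (e_mem_Sf he1 hen)).symm
    have hcle := csum_le he1 μ
    have hle : mval n e ≤ ∑ j ∈ Sf n e, (n / j - μ.parts.count j) := by
      rw [hsub, hSfsum]
      omega
    exact (pow_dvd_pow _ hle).trans
      (by rw [hPoly]; exact pow_dvd_prod_one_add_X_pow n e _ hΦdvd1 _)
  -- assemble and contradict key
  have hΦp : Polynomial.cyclotomic (2 * e) ℤ ∣ p := by rwa [← hde]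
  have hfinal : (Polynomial.cyclotomic (2 * e) ℤ) ^ (mval n e + 1)
      ∣ ∑ μ : Nat.Partition n, hPoly n μ := by
    rw [hsum_spec, pow_succ]
    exact mul_dvd_mul hΦG (hΦp.trans hpnum)
  apply key n e he1 hen
  have hmapdvd := Polynomial.map_dvd (Int.castRingHom ℂ) hfinal
  rw [Polynomial.map_pow, Polynomial.map_cyclotomic] at hmapdvd
  have hlin : (X - Polynomial.C (zC e)) ∣ Polynomial.cyclotomic (2 * e) ℂ :=
    Polynomial.dvd_iff_isRoot.mpr ((zC_prim he1).isRoot_cyclotomic (by omega))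
  exact (pow_dvd_pow_of_dvd hlin _).trans hmapdvd
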